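/- Under the hypotheses of the previous statement, the Lagrange multipliers satisfy the linear system L λ = −b, where L_{jk} = Σ_{i=1}^d E[∂_{x_i}H_j(X) ∂_{x_i}H_k(X)] and b_j = E[ΔH_j(X)], expectations taken with X ∼ f̂. Consequently, if L is invertible, λ = −L⁻¹ b is determined uniquely by moments of derivatives of H under f̂. -/

import Mathlib

open MeasureTheory Real Filter Matrix

/-- Auxiliary: the integral of a directional derivative of a compactly supported `C¹`
function vanishes. -/
private lemma integral_fderiv_single_eq_zero {d : ℕ} (u : (Fin d → ℝ) → ℝ)
    (hu : ContDiff ℝ 1 u) (hsupp : HasCompactSupport u) (v : Fin d → ℝ) :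
    ∫ x, fderiv ℝ u x v = 0 := by
  obtain ⟨C, hC⟩ := ContDiff.lipschitzWith_of_hasCompactSupport hsupp hu one_ne_zero
  have key := LipschitzWith.integral_lineDeriv_mul_eq (μ := volume)
      (LipschitzWith.const (1 : ℝ)) hC hsupp (-v)
  have h1 : ∀ x : Fin d → ℝ, lineDeriv ℝ (fun _ : Fin d → ℝ => (1 : ℝ)) x (-v) = 0 := by
    intro x
    rw [(differentiableAt_const (1 : ℝ)).lineDeriv_eq_fderiv]
    simp
  have h2 : ∀ x : Fin d → ℝ, lineDeriv ℝ u x (- -v) = fderiv ℝ u x v := by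
    intro x
    rw [neg_neg, ((hu.differentiable one_ne_zero) x).lineDeriv_eq_fderiv]
  simp only [h1, zero_mul, integral_zero, h2, mul_one] at key
  exact key.symm

/-- Auxiliary: the integral over `ℝ^d` of the divergence of a `C¹` vector field with
integrable components and integrable divergence vanishes. -/
private lemma integral_divergence_eq_zero {d : ℕ} (u : Fin d → (Fin d → ℝ) → ℝ)
    (hu : ∀ i, ContDiff ℝ 1 (u i))
    (hui : ∀ i, Integrable (u i))
    (hdiv : Integrable (fun x => ∑ i, fderiv ℝ (u i) x (Pi.single i 1))) :
    ∫ x, ∑ i, fderiv ℝ (u i) x (Pi.single i 1) = 0 := by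
  classical
  set Div : (Fin d → ℝ) → ℝ := fun x => ∑ i, fderiv ℝ (u i) x (Pi.single i 1) with hDiv
  let c : ContDiffBump (0 : Fin d → ℝ) := ⟨1, 2, one_pos, one_lt_two⟩
  obtain ⟨K, hK⟩ := ContDiff.lipschitzWith_of_hasCompactSupport c.hasCompactSupport
      (c.contDiff (n := 1)) (by norm_num)
  set r : ℕ → ℝ := fun n => (n : ℝ) + 1 with hrdef
  have hrpos : ∀ n, (0 : ℝ) < r n := fun n => by positivity
  set χ : ℕ → (Fin d → ℝ) → ℝ := fun n x => c ((r n)⁻¹ • x) with hχdef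
  have hχc : ∀ n, ContDiff ℝ 1 (χ n) :=
    fun n => (c.contDiff (n := 1)).comp (contDiff_const_smul _)
  have hχsupp : ∀ n, HasCompactSupport (χ n) := by
    intro n
    have h := c.hasCompactSupport.comp_homeomorph
      (Homeomorph.smulOfNeZero ((r n)⁻¹) (by positivity : (0:ℝ) < (r n)⁻¹).ne')
    simpa [Function.comp_def, hχdef] using h
  have hχL : ∀ n, LipschitzWith (K * ‖(r n)⁻¹‖₊) (χ n) :=
    fun n => hK.comp (lipschitzWith_smul ((r n)⁻¹))
  have hχd : ∀ n x (i : Fin d), ‖fderiv ℝ (χ n) x (Pi.single i 1)‖ ≤ (K : ℝ) * (r n)⁻¹ := by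
    intro n x i
    have h1 : ‖fderiv ℝ (χ n) x‖ ≤ ((K * ‖(r n)⁻¹‖₊ : NNReal) : ℝ) :=
      norm_fderiv_le_of_lipschitz ℝ (hχL n)
    have h2 : ((K * ‖(r n)⁻¹‖₊ : NNReal) : ℝ) = (K : ℝ) * (r n)⁻¹ := by
      push_cast
      rw [Real.norm_eq_abs, abs_of_nonneg (by positivity)]
    have h3 : ‖(Pi.single i (1:ℝ) : Fin d → ℝ)‖ = 1 := by
      rw [Pi.norm_single]
      exact norm_one
    calc ‖fderiv ℝ (χ n) x (Pi.single i 1)‖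
        ≤ ‖fderiv ℝ (χ n) x‖ * ‖(Pi.single i (1:ℝ) : Fin d → ℝ)‖ :=
          ContinuousLinearMap.le_opNorm _ _
      _ = ‖fderiv ℝ (χ n) x‖ := by rw [h3, mul_one]
      _ ≤ (K : ℝ) * (r n)⁻¹ := h2 ▸ h1
  have hχone : ∀ x : Fin d → ℝ, ∀ᶠ n in atTop, χ n x = 1 := by
    intro x
    filter_upwards [eventually_ge_atTop ⌈‖x‖⌉₊] with n hn
    apply c.one_of_mem_closedBall
    have hxr : ‖x‖ ≤ r n := by
      have h1 : (⌈‖x‖⌉₊ : ℝ) ≤ (n : ℝ) := by exact_mod_cast hn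
      have h2 := Nat.le_ceil ‖x‖
      simp only [hrdef]
      linarith
    have hnorm : ‖(r n)⁻¹ • x‖ ≤ 1 := by
      rw [norm_smul, Real.norm_eq_abs, abs_of_nonneg (by positivity)]
      rw [inv_mul_le_iff₀ (hrpos n), mul_one]
      exact hxr
    simpa [Metric.mem_closedBall, dist_zero_right] using hnorm
  have hχnonneg : ∀ n x, 0 ≤ χ n x := fun n x => c.nonneg
  have hχle : ∀ n x, χ n x ≤ 1 := fun n x => c.le_one
  have hcontdu : ∀ i : Fin d, Continuous fun x => fderiv ℝ (u i) x (Pi.single i 1) :=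
    fun i => ((hu i).continuous_fderiv one_ne_zero).clm_apply continuous_const
  have hcontDiv : Continuous Div :=
    continuous_finset_sum _ fun i _ => hcontdu i
  have hcontdχ : ∀ n (i : Fin d), Continuous fun x => fderiv ℝ (χ n) x (Pi.single i 1) :=
    fun n i => ((hχc n).continuous_fderiv one_ne_zero).clm_apply continuous_const
  have hχdsupp : ∀ n (i : Fin d),
      HasCompactSupport fun x => fderiv ℝ (χ n) x (Pi.single i 1) := by
    intro n i
    have h1 : HasCompactSupport (fderiv ℝ (χ n)) := (hχsupp n).fderiv ℝ
    have h2 := h1.comp_left (g := fun L : (Fin d → ℝ) →L[ℝ] ℝ => L (Pi.single i 1)) rfl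
    simpa [Function.comp_def] using h2
  have hI1 : ∀ n (i : Fin d),
      Integrable fun x => χ n x * fderiv ℝ (u i) x (Pi.single i 1) :=
    fun n i => (((hχc n).continuous).mul (hcontdu i)).integrable_of_hasCompactSupport
      ((hχsupp n).mul_right)
  have hI2 : ∀ n (i : Fin d),
      Integrable fun x => u i x * fderiv ℝ (χ n) x (Pi.single i 1) :=
    fun n i => (((hu i).continuous).mul (hcontdχ n i)).integrable_of_hasCompactSupport
      ((hχdsupp n i).mul_left)
  have hibp : ∀ n (i : Fin d),
      ∫ x, χ n x * fderiv ℝ (u i) x (Pi.single i 1)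
        = - ∫ x, u i x * fderiv ℝ (χ n) x (Pi.single i 1) := by
    intro n i
    have hprod : ContDiff ℝ 1 fun x => χ n x * u i x := (hχc n).mul (hu i)
    have hpsupp : HasCompactSupport fun x => χ n x * u i x := (hχsupp n).mul_right
    have hz := integral_fderiv_single_eq_zero _ hprod hpsupp (Pi.single i 1)
    have hfd : ∀ x, fderiv ℝ (fun y => χ n y * u i y) x (Pi.single i 1)
        = χ n x * fderiv ℝ (u i) x (Pi.single i 1)
          + u i x * fderiv ℝ (χ n) x (Pi.single i 1) := by
      intro x
      rw [fderiv_fun_mul ((hχc n).differentiable one_ne_zero x) ((hu i).differentiable one_ne_zero x)]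
      simp
    simp only [hfd] at hz
    rw [integral_add (hI1 n i) (hI2 n i)] at hz
    linarith
  have hkey : ∀ n, ∫ x, χ n x * Div x
      = - ∑ i, ∫ x, u i x * fderiv ℝ (χ n) x (Pi.single i 1) := by
    intro n
    have hsplit : ∫ x, χ n x * Div x
        = ∑ i, ∫ x, χ n x * fderiv ℝ (u i) x (Pi.single i 1) := by
      rw [← integral_finset_sum _ (fun i _ => hI1 n i)]
      congr 1
      funext x
      rw [hDiv, Finset.mul_sum]
    rw [hsplit, Finset.sum_congr rfl fun i _ => hibp n i, Finset.sum_neg_distrib]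
  have hlim1 : Tendsto (fun n => ∫ x, χ n x * Div x) atTop (nhds (∫ x, Div x)) := by
    apply tendsto_integral_filter_of_dominated_convergence (fun x => ‖Div x‖)
    · exact Eventually.of_forall fun n =>
        (((hχc n).continuous).mul hcontDiv).aestronglyMeasurable
    · refine Eventually.of_forall fun n => Eventually.of_forall fun x => ?_
      show ‖χ n x * Div x‖ ≤ ‖Div x‖
      rw [norm_mul]
      have h1 : ‖χ n x‖ ≤ 1 := by
        rw [Real.norm_eq_abs, abs_of_nonneg (hχnonneg n x)]
        exact hχle n x
      calc ‖χ n x‖ * ‖Div x‖ ≤ 1 * ‖Div x‖ :=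
            mul_le_mul_of_nonneg_right h1 (norm_nonneg _)
        _ = ‖Div x‖ := one_mul _
    · exact hdiv.norm
    · refine Eventually.of_forall fun x => ?_
      have heq : (fun n => χ n x * Div x) =ᶠ[atTop] fun _ => Div x :=
        (hχone x).mono fun n hn => by simp only [hn, one_mul]
      exact Tendsto.congr' heq.symm tendsto_const_nhds
  have hrlim : Tendsto (fun n => (r n)⁻¹) atTop (nhds 0) := by
    apply Tendsto.inv_tendsto_atTop
    exact tendsto_atTop_add_const_right _ 1 tendsto_natCast_atTop_atTop
  have hlim2 : Tendsto (fun n => ∑ i : Fin d, ∫ x, u i x * fderiv ℝ (χ n) x (Pi.single i 1))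
      atTop (nhds 0) := by
    have hterm : ∀ i : Fin d,
        Tendsto (fun n => ∫ x, u i x * fderiv ℝ (χ n) x (Pi.single i 1)) atTop (nhds 0) := by
      intro i
      apply squeeze_zero_norm (a := fun n => ((K : ℝ) * ∫ x, ‖u i x‖) * (r n)⁻¹)
      · intro n
        calc ‖∫ x, u i x * fderiv ℝ (χ n) x (Pi.single i 1)‖
            ≤ ∫ x, ‖u i x * fderiv ℝ (χ n) x (Pi.single i 1)‖ :=
              norm_integral_le_integral_norm _
          _ ≤ ∫ x, ‖u i x‖ * ((K : ℝ) * (r n)⁻¹) := by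
              apply integral_mono_of_nonneg (Eventually.of_forall fun x => norm_nonneg _)
                ((hui i).norm.mul_const _)
              refine Eventually.of_forall fun x => ?_
              show ‖u i x * fderiv ℝ (χ n) x (Pi.single i 1)‖
                ≤ ‖u i x‖ * ((K : ℝ) * (r n)⁻¹)
              rw [norm_mul]
              exact mul_le_mul_of_nonneg_left (hχd n x i) (norm_nonneg _)
          _ = ((K : ℝ) * ∫ x, ‖u i x‖) * (r n)⁻¹ := by
              rw [integral_mul_const]
              ring
      · have := hrlim.const_mul ((K : ℝ) * ∫ x, ‖u i x‖)
        simpa using this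
    have := tendsto_finset_sum (Finset.univ : Finset (Fin d)) fun i _ => hterm i
    simpa using this
  have h0 : Tendsto (fun n => ∫ x, χ n x * Div x) atTop (nhds 0) := by
    have h := hlim2.neg
    simp only [neg_zero] at h
    exact Tendsto.congr (fun n => (hkey n).symm) h
  exact tendsto_nhds_unique hlim1 h0

/-- The Lagrange multipliers satisfy the linear system `L λ = -b` where
`L_{jk} = ∑ i E[∂ᵢH_j ∂ᵢH_k]` and `b_j = E[ΔH_j]` under `X ∼ f̂`; if `L` is invertible,
`λ = -L⁻¹ b`. -/
theorem stmt7 {d N : ℕ} (H : Fin N → (Fin d → ℝ) → ℝ) (hH : ∀ j, ContDiff ℝ 2 (H j))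
    (lam : Fin N → ℝ) (Z : ℝ)
    (hZ : Z = ∫ x, Real.exp (∑ k, lam k * H k x))
    (hZint : Integrable (fun x => Real.exp (∑ k, lam k * H k x)))
    (hZpos : 0 < Z)
    (fhat : (Fin d → ℝ) → ℝ)
    (hfhat : ∀ x, fhat x = Real.exp (∑ k, lam k * H k x) / Z)
    (hdecay : ∀ (j : Fin N) (i : Fin d),
      Tendsto (fun x : Fin d → ℝ => fhat x * fderiv ℝ (H j) x (Pi.single i 1))
        (cocompact _) (nhds 0))
    (hint1 : ∀ (i : Fin d) (j k : Fin N), Integrable (fun x =>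
      fderiv ℝ (H j) x (Pi.single i 1) * fderiv ℝ (H k) x (Pi.single i 1) * fhat x))
    (hint2 : ∀ j : Fin N, Integrable (fun x =>
      (∑ i : Fin d, fderiv ℝ (fun y => fderiv ℝ (H j) y (Pi.single i 1)) x (Pi.single i 1))
        * fhat x))
    (L : Matrix (Fin N) (Fin N) ℝ)
    (hL : ∀ j k, L j k = ∑ i : Fin d, ∫ x,
      fderiv ℝ (H j) x (Pi.single i 1) * fderiv ℝ (H k) x (Pi.single i 1) * fhat x)
    (b : Fin N → ℝ)
    (hb : ∀ j, b j = ∫ x,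
      (∑ i : Fin d, fderiv ℝ (fun y => fderiv ℝ (H j) y (Pi.single i 1)) x (Pi.single i 1))
        * fhat x) :
    L.mulVec lam = -b ∧ (IsUnit L.det → lam = -(L⁻¹.mulVec b)) := by
  classical
  set g : (Fin d → ℝ) → ℝ := fun x => ∑ k, lam k * H k x with hgdef
  have hfe : fhat = fun x => Real.exp (g x) / Z := funext hfhat
  have hgC : ContDiff ℝ 2 g := ContDiff.sum fun k _ => contDiff_const.mul (hH k)
  have hfhatC : ContDiff ℝ 1 fhat := by
    rw [hfe]
    exact (Real.contDiff_exp.comp (hgC.of_le one_le_two)).div_const Z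
  have hfpos : ∀ x, 0 ≤ fhat x := by
    intro x
    rw [hfhat x]
    positivity
  have hfInt : Integrable fhat := by
    rw [hfe]
    exact hZint.div_const Z
  have hgd : ∀ x, HasFDerivAt g (∑ k, lam k • fderiv ℝ (H k) x) x := by
    intro x
    exact HasFDerivAt.fun_sum fun k _ =>
      (((hH k).differentiable two_ne_zero x).hasFDerivAt).const_mul (lam k)
  have hfg : ∀ x, fhat x = Real.exp (g x) / Z := fun x => congrFun hfe x
  have hfd : ∀ x, HasFDerivAt fhat (fhat x • (∑ k, lam k • fderiv ℝ (H k) x)) x := by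
    intro x
    have h1 : HasFDerivAt (fun y => Real.exp (g y))
        (Real.exp (g x) • (∑ k, lam k • fderiv ℝ (H k) x)) x := (hgd x).exp
    have h2 := h1.const_smul Z⁻¹
    have hfun : (fun y => Z⁻¹ • Real.exp (g y)) = fhat := by
      rw [hfe]
      funext y
      rw [smul_eq_mul, div_eq_inv_mul]
    have hsc : fhat x • (∑ k, lam k • fderiv ℝ (H k) x)
        = Z⁻¹ • (Real.exp (g x) • (∑ k, lam k • fderiv ℝ (H k) x)) := by
      rw [smul_smul, hfg x, div_eq_inv_mul]
    rw [hsc, ← hfun]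
    exact h2
  have hdHC : ∀ (j : Fin N) (i : Fin d),
      ContDiff ℝ 1 fun x => fderiv ℝ (H j) x (Pi.single i 1) := by
    intro j i
    exact ((hH j).fderiv_right (m := 1) (by norm_num)).clm_apply contDiff_const
  -- main per-row identity
  have key : ∀ j, (∑ k, L j k * lam k) + b j = 0 := by
    intro j
    set u : Fin d → (Fin d → ℝ) → ℝ :=
      fun i x => fhat x * fderiv ℝ (H j) x (Pi.single i 1) with hudef
    have huC : ∀ i, ContDiff ℝ 1 (u i) := fun i => hfhatC.mul (hdHC j i)
    have hud : ∀ (i : Fin d) x, HasFDerivAt (u i)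
        (fhat x • fderiv ℝ (fun y => fderiv ℝ (H j) y (Pi.single i 1)) x
          + fderiv ℝ (H j) x (Pi.single i 1) • (fhat x • (∑ k, lam k • fderiv ℝ (H k) x))) x :=
      fun i x => (hfd x).mul (((hdHC j i).differentiable one_ne_zero x).hasFDerivAt)
    set T : (Fin d → ℝ) → ℝ := fun x =>
      (∑ k, lam k * ∑ i : Fin d,
        fderiv ℝ (H j) x (Pi.single i 1) * fderiv ℝ (H k) x (Pi.single i 1) * fhat x)
      + (∑ i : Fin d, fderiv ℝ (fun y => fderiv ℝ (H j) y (Pi.single i 1)) x (Pi.single i 1))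
          * fhat x with hTdef
    have claim1 : ∀ x, (∑ i : Fin d, fderiv ℝ (u i) x (Pi.single i 1)) = T x := by
      intro x
      have hterm : ∀ i : Fin d, fderiv ℝ (u i) x (Pi.single i 1)
          = fhat x * fderiv ℝ (fun y => fderiv ℝ (H j) y (Pi.single i 1)) x (Pi.single i 1)
            + fderiv ℝ (H j) x (Pi.single i 1)
              * (fhat x * ∑ k, lam k * fderiv ℝ (H k) x (Pi.single i 1)) := by
        intro i
        rw [(hud i x).fderiv]
        simp [ContinuousLinearMap.sum_apply, Finset.mul_sum]
      rw [Finset.sum_congr rfl fun i _ => hterm i, Finset.sum_add_distrib, hTdef]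
      rw [add_comm]
      congr 1
      · simp only [Finset.mul_sum]
        rw [Finset.sum_comm]
        exact Finset.sum_congr rfl fun k _ => Finset.sum_congr rfl fun i _ => by ring
      · rw [← Finset.mul_sum, mul_comm]
    have hfirstint : Integrable (fun x => ∑ k, lam k * ∑ i : Fin d,
        fderiv ℝ (H j) x (Pi.single i 1) * fderiv ℝ (H k) x (Pi.single i 1) * fhat x) :=
      integrable_finset_sum _ fun k _ =>
        (integrable_finset_sum _ fun i _ => hint1 i j k).const_mul (lam k)
    have hTint : Integrable T := by
      rw [hTdef]
      exact hfirstint.add (hint2 j)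
    have huint : ∀ i, Integrable (u i) := by
      intro i
      apply Integrable.mono' ((hfInt.add (hint1 i j j)).div_const 2)
      · exact (hfhatC.continuous.mul ((hdHC j i).continuous)).aestronglyMeasurable
      · refine Eventually.of_forall fun x => ?_
        set a := fderiv ℝ (H j) x (Pi.single i 1) with ha
        have h0 := hfpos x
        have hnu : ‖u i x‖ = fhat x * |a| := by
          rw [hudef]
          simp only [norm_mul, Real.norm_eq_abs, abs_of_nonneg h0]
          rfl
        rw [hnu]
        have habs : |a| ≤ (1 + a * a) / 2 := by
          nlinarith [sq_nonneg (|a| - 1), sq_abs a]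
        calc fhat x * |a| ≤ fhat x * ((1 + a * a) / 2) :=
              mul_le_mul_of_nonneg_left habs h0
          _ = (fhat x + a * a * fhat x) / 2 := by ring
    have hfeq : (fun x => ∑ i : Fin d, fderiv ℝ (u i) x (Pi.single i 1)) = T :=
      funext claim1
    have hz := integral_divergence_eq_zero u huC huint (hfeq ▸ hTint)
    rw [hfeq] at hz
    have e1 : ∫ x, T x = (∑ k, lam k * L j k) + b j := by
      rw [hTdef, integral_add hfirstint (hint2 j)]
      congr 1
      · rw [integral_finset_sum _ (fun k _ =>
          (integrable_finset_sum _ fun i _ => hint1 i j k).const_mul (lam k))]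
        refine Finset.sum_congr rfl fun k _ => ?_
        rw [integral_const_mul, integral_finset_sum _ (fun i _ => hint1 i j k), hL]
      · exact (hb j).symm
    rw [e1] at hz
    rw [Finset.sum_congr rfl fun k _ => mul_comm (L j k) (lam k)]
    exact hz
  have hmain : L.mulVec lam = -b := by
    funext j
    have h := key j
    simp only [Matrix.mulVec, dotProduct, Pi.neg_apply]
    linarith
  refine ⟨hmain, fun hdet => ?_⟩
  have h1 := congrArg (fun v => L⁻¹.mulVec v) hmain
  simp only [Matrix.mulVec_mulVec, Matrix.nonsing_inv_mul _ hdet, Matrix.one_mulVec,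
    Matrix.mulVec_neg] at h1
  exact h1
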